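/- Let l > n ≥ 3 and let A be the graph on {1,...,2l−1} with distinct u,v adjacent iff |u−v| ≤ l−1. For any graph F of diameter 2 on n vertices and any i ∈ {1,...,l−1}, the F-degree of vertex i+1 in A exceeds the F-degree of vertex i in A by at least C(l−2, n−2); in particular the F-degrees z_1 < z_2 < ... < z_l of vertices 1 through l are strictly increasing. -/

import Mathlib

/-- The `F`-degree of a vertex `v` in a graph `G`: the number of subgraphs of `G`
isomorphic to `F` that contain `v`. -/
noncomputable def Fdeg {V W : Type*} (G : SimpleGraph V) (F : SimpleGraph W) (v : V) : ℕ :=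
  {H : G.Subgraph | Nonempty (H.coe ≃g F) ∧ v ∈ H.verts}.ncard

/-- The graph `A_{2l-1}` on vertex set `{1, ..., 2l-1}`, where distinct `i, j`
are adjacent iff `|i - j| ≤ l - 1`. -/
def graphA (l : ℕ) : SimpleGraph {v : ℕ // 1 ≤ v ∧ v ≤ 2 * l - 1} :=
  SimpleGraph.fromRel (fun i j => |(i.val : ℤ) - (j.val : ℤ)| ≤ (l : ℤ) - 1)

open SimpleGraph Set

section Helpers

variable {V W : Type*} {G : SimpleGraph V} {F : SimpleGraph W}

instance graphAVFintype (l : ℕ) : Fintype {v : ℕ // 1 ≤ v ∧ v ≤ 2 * l - 1} :=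
  Fintype.ofFinset (Finset.Icc 1 (2 * l - 1)) (by intro x; rw [Finset.mem_Icc]; rfl)

lemma subgraph_finite {V : Type*} [Finite V] (G : SimpleGraph V) : Finite G.Subgraph :=
  Finite.of_injective (fun H => (H.verts, H.Adj)) (by
    intro H H' h
    simp only [Prod.mk.injEq] at h
    exact SimpleGraph.Subgraph.ext h.1 h.2)

/-- Build a subgraph of `G` from an edge-preserving map `φ : W → V`. -/
def embSub (G : SimpleGraph V) (F : SimpleGraph W) (φ : W → V)
    (h : ∀ a b, F.Adj a b → G.Adj (φ a) (φ b)) : G.Subgraph where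
  verts := Set.range φ
  Adj := Relation.Map F.Adj φ φ
  adj_sub := by rintro _ _ ⟨a, b, hab, rfl, rfl⟩; exact h a b hab
  edge_vert := by rintro _ _ ⟨a, b, hab, rfl, rfl⟩; exact ⟨a, rfl⟩
  symm := ⟨by rintro _ _ ⟨a, b, hab, rfl, rfl⟩; exact ⟨b, a, hab.symm, rfl, rfl⟩⟩

@[simp] lemma embSub_verts (φ : W → V) (h) : (embSub G F φ h).verts = Set.range φ := rfl

@[simp] lemma embSub_adj (φ : W → V) (h) (x y : V) :
    (embSub G F φ h).Adj x y ↔ Relation.Map F.Adj φ φ x y := Iff.rfl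

lemma embSub_coe_iso (φ : W → V) (h : ∀ a b, F.Adj a b → G.Adj (φ a) (φ b))
    (hinj : Function.Injective φ) : Nonempty ((embSub G F φ h).coe ≃g F) := by
  have iso : F ≃g (embSub G F φ h).coe := by
    refine ⟨Equiv.ofInjective φ hinj, ?_⟩
    intro a b
    show Relation.Map F.Adj φ φ _ _ ↔ F.Adj a b
    constructor
    · rintro ⟨a', b', hab, ha, hb⟩
      have ha2 : a' = a := hinj (by rw [ha]; rfl)
      have hb2 : b' = b := hinj (by rw [hb]; rfl)
      subst ha2; subst hb2; exact hab
    · intro hab; exact ⟨a, b, hab, rfl, rfl⟩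
  exact ⟨iso.symm⟩

/-- Transport of a subgraph along an equivalence of vertices that preserves its edges. -/
def swapSub (G : SimpleGraph V) (τ : V ≃ V) (H : G.Subgraph)
    (h : ∀ x y, H.Adj x y → G.Adj (τ x) (τ y)) : G.Subgraph where
  verts := τ '' H.verts
  Adj x y := H.Adj (τ.symm x) (τ.symm y)
  adj_sub := fun {x y} hx => by have := h _ _ hx; simpa using this
  edge_vert := fun {x y} hx => ⟨τ.symm x, H.edge_vert hx, by simp⟩
  symm := ⟨fun x y hxy => H.adj_symm hxy⟩

lemma swapSub_coe_iso (τ : V ≃ V) (H : G.Subgraph)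
    (h : ∀ x y, H.Adj x y → G.Adj (τ x) (τ y)) :
    Nonempty ((swapSub G τ H h).coe ≃g H.coe) := by
  refine ⟨⟨⟨fun x => ⟨τ.symm x.1, ?_⟩, fun p => ⟨τ p.1, Set.mem_image_of_mem _ p.2⟩,
    fun x => by simp, fun p => by simp⟩, Iff.rfl⟩⟩
  obtain ⟨x, hx⟩ := x
  obtain ⟨p, hp, rfl⟩ := hx
  simpa using hp

@[simp] lemma swapSub_verts (τ : V ≃ V) (H : G.Subgraph) (h) :
    (swapSub G τ H h).verts = τ '' H.verts := rfl

@[simp] lemma swapSub_adj (τ : V ≃ V) (H : G.Subgraph) (h) (x y : V) :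
    (swapSub G τ H h).Adj x y ↔ H.Adj (τ.symm x) (τ.symm y) := Iff.rfl

lemma graphA_adj {l : ℕ} (x y : {v : ℕ // 1 ≤ v ∧ v ≤ 2 * l - 1}) :
    (graphA l).Adj x y ↔ x ≠ y ∧ |(x.val : ℤ) - (y.val : ℤ)| ≤ (l : ℤ) - 1 := by
  show (SimpleGraph.fromRel _).Adj x y ↔ _
  rw [SimpleGraph.fromRel_adj]
  constructor
  · rintro ⟨hne, h | h⟩
    · exact ⟨hne, h⟩
    · exact ⟨hne, by rwa [abs_sub_comm]⟩
  · rintro ⟨hne, h⟩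
    exact ⟨hne, Or.inl h⟩

/-- `F` has an edge when its diameter is 2 and it has at least 2 vertices. -/
lemma exists_adj_of_diam_two [Fintype W] (F : SimpleGraph W) (hcard : 2 ≤ Fintype.card W)
    (hdiam : F.diam = 2) : ∃ a b, F.Adj a b := by
  by_contra h
  push_neg at h
  have hbot : F = ⊥ := by
    ext a b
    simp [h a b]
  have : F.diam = 0 := by rw [hbot]; simp
  omega

end Helpers
section Family

variable {W : Type*}

/-- The vertex map realizing `F` on `{u+1} ∪ s ∪ {u+l}` sending `a₀ ↦ u+1`, `b₀ ↦ u+l`. -/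
noncomputable def famPhi (l u : ℕ) (hu : 1 ≤ u ∧ u + 1 ≤ l) (a₀ b₀ : W)
    (s : Finset ℕ) (hsub : ∀ x ∈ s, u + 2 ≤ x ∧ x ≤ u + l - 1)
    (e : {a : W // a ≠ a₀ ∧ a ≠ b₀} ≃ {x : ℕ // x ∈ s}) :
    W → {v : ℕ // 1 ≤ v ∧ v ≤ 2 * l - 1} := fun a =>
  letI := Classical.decEq W
  if h1 : a = a₀ then ⟨u + 1, by omega⟩
  else if h2 : a = b₀ then ⟨u + l, by omega⟩
  else ⟨(e ⟨a, h1, h2⟩ : ℕ), by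
    have := hsub _ (e ⟨a, h1, h2⟩).2
    omega⟩

variable (l u : ℕ) (hu : 1 ≤ u ∧ u + 1 ≤ l) (a₀ b₀ : W)
    (s : Finset ℕ) (hsub : ∀ x ∈ s, u + 2 ≤ x ∧ x ≤ u + l - 1)
    (e : {a : W // a ≠ a₀ ∧ a ≠ b₀} ≃ {x : ℕ // x ∈ s})

lemma famPhi_a₀ : (famPhi l u hu a₀ b₀ s hsub e a₀).val = u + 1 := by
  simp [famPhi]

lemma famPhi_b₀ (h : b₀ ≠ a₀) : (famPhi l u hu a₀ b₀ s hsub e b₀).val = u + l := by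
  simp [famPhi, h]

lemma famPhi_other {a : W} (h1 : a ≠ a₀) (h2 : a ≠ b₀) :
    (famPhi l u hu a₀ b₀ s hsub e a).val ∈ s := by
  simp only [famPhi, dif_neg h1, dif_neg h2]
  exact (e ⟨a, h1, h2⟩).2

lemma famPhi_bounds (a : W) :
    u + 1 ≤ (famPhi l u hu a₀ b₀ s hsub e a).val ∧
      (famPhi l u hu a₀ b₀ s hsub e a).val ≤ u + l := by
  by_cases h1 : a = a₀
  · rw [h1, famPhi_a₀]; omega
  by_cases h2 : a = b₀
  · have hba : b₀ ≠ a₀ := fun hc => h1 (h2.trans hc)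
    rw [h2, famPhi_b₀ _ _ _ _ _ _ _ _ hba]; omega
  · have := hsub _ (famPhi_other l u hu a₀ b₀ s hsub e h1 h2)
    omega

lemma famPhi_injective (h : a₀ ≠ b₀) :
    Function.Injective (famPhi l u hu a₀ b₀ s hsub e) := by
  intro a b hab
  have key : ∀ c : W, ((famPhi l u hu a₀ b₀ s hsub e c).val = u + 1 ↔ c = a₀) ∧
      ((famPhi l u hu a₀ b₀ s hsub e c).val = u + l ↔ c = b₀) := by
    intro c
    by_cases h1 : c = a₀
    · have hv : (famPhi l u hu a₀ b₀ s hsub e c).val = u + 1 := by rw [h1, famPhi_a₀]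
      refine ⟨⟨fun _ => h1, fun _ => hv⟩, ⟨fun hc => ?_, fun hc => absurd (h1.symm.trans hc) h⟩⟩
      omega
    by_cases h2 : c = b₀
    · have hv : (famPhi l u hu a₀ b₀ s hsub e c).val = u + l := by
        rw [h2, famPhi_b₀ _ _ _ _ _ _ _ _ (Ne.symm h)]
      refine ⟨⟨fun hc => ?_, fun hc => absurd hc h1⟩, ⟨fun _ => h2, fun _ => hv⟩⟩
      omega
    · have hm := hsub _ (famPhi_other l u hu a₀ b₀ s hsub e h1 h2)
      exact ⟨⟨fun hv => by omega, fun hc => absurd hc h1⟩,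
        ⟨fun hv => by omega, fun hc => absurd hc h2⟩⟩
  have hval : (famPhi l u hu a₀ b₀ s hsub e a).val =
      (famPhi l u hu a₀ b₀ s hsub e b).val := by rw [hab]
  by_cases h1 : a = a₀
  · have : (famPhi l u hu a₀ b₀ s hsub e b).val = u + 1 := by
      rw [← hval, ((key a).1).mpr h1]
    rw [h1, ((key b).1).mp this]
  by_cases h2 : a = b₀
  · have : (famPhi l u hu a₀ b₀ s hsub e b).val = u + l := by
      rw [← hval, ((key a).2).mpr h2]
    rw [h2, ((key b).2).mp this]
  · have hb1 : b ≠ a₀ := by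
      intro hb; apply h1
      exact ((key a).1).mp (by rw [hval, ((key b).1).mpr hb])
    have hb2 : b ≠ b₀ := by
      intro hb; apply h2
      exact ((key a).2).mp (by rw [hval, ((key b).2).mpr hb])
    -- both in third class
    have : (e ⟨a, h1, h2⟩ : ℕ) = (e ⟨b, hb1, hb2⟩ : ℕ) := by
      have h3 : (famPhi l u hu a₀ b₀ s hsub e a).val = (e ⟨a, h1, h2⟩ : ℕ) := by
        simp [famPhi, h1, h2]
      have h4 : (famPhi l u hu a₀ b₀ s hsub e b).val = (e ⟨b, hb1, hb2⟩ : ℕ) := by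
        simp [famPhi, hb1, hb2]
      rw [← h3, ← h4, hval]
    have := e.injective (Subtype.ext this)
    exact congrArg Subtype.val this

lemma famPhi_adj (h : a₀ ≠ b₀) (a b : W) (hab : a ≠ b) :
    (graphA l).Adj (famPhi l u hu a₀ b₀ s hsub e a) (famPhi l u hu a₀ b₀ s hsub e b) := by
  rw [graphA_adj]
  have hba := famPhi_bounds l u hu a₀ b₀ s hsub e a
  have hbb := famPhi_bounds l u hu a₀ b₀ s hsub e b
  refine ⟨fun hc => hab (famPhi_injective l u hu a₀ b₀ s hsub e h hc), ?_⟩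
  rw [abs_le]
  push_cast
  omega

lemma famPhi_mem_range (x : ℕ) (hx : x ∈ s) :
    ∃ a, (famPhi l u hu a₀ b₀ s hsub e a).val = x := by
  refine ⟨(e.symm ⟨x, hx⟩).1, ?_⟩
  have h1 := (e.symm ⟨x, hx⟩).2.1
  have h2 := (e.symm ⟨x, hx⟩).2.2
  simp only [famPhi, dif_neg h1, dif_neg h2]
  have heq : (⟨(e.symm ⟨x, hx⟩).1, h1, h2⟩ : {a : W // a ≠ a₀ ∧ a ≠ b₀}) = e.symm ⟨x, hx⟩ :=
    Subtype.ext rfl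
  rw [heq, Equiv.apply_symm_apply]

end Family
section Main

variable {W : Type*} [Fintype W]

lemma key_step (F : SimpleGraph W) (n l : ℕ) (hn : 3 ≤ n) (hl : n < l)
    (hcard : Fintype.card W = n) (hdiam : F.diam = 2)
    (u u' : {v : ℕ // 1 ≤ v ∧ v ≤ 2 * l - 1}) (h1 : 1 ≤ u.val) (h2 : u.val ≤ l - 1)
    (h3 : u'.val = u.val + 1) :
    Fdeg (graphA l) F u + Nat.choose (l - 2) (n - 2) ≤ Fdeg (graphA l) F u' := by
  classical
  haveI : Finite (graphA l).Subgraph := subgraph_finite _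
  have hl4 : 4 ≤ l := by omega
  have hu2 : u.val + 1 ≤ l := by omega
  set G := graphA l with hG
  set Su : Set G.Subgraph := {H | Nonempty (H.coe ≃g F) ∧ u ∈ H.verts} with hSu
  set Su' : Set G.Subgraph := {H | Nonempty (H.coe ≃g F) ∧ u' ∈ H.verts} with hSu'
  have hFdeg_u : Fdeg G F u = Su.ncard := rfl
  have hFdeg_u' : Fdeg G F u' = Su'.ncard := rfl
  have hne : u ≠ u' := by
    intro h; rw [h] at h3; omega
  set τ := Equiv.swap u u' with hτ
  have hτu : τ u = u' := Equiv.swap_apply_left u u'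
  have hτu' : τ u' = u := Equiv.swap_apply_right u u'
  have hτsymm : τ.symm = τ := Equiv.symm_swap u u'
  have vul_prop : 1 ≤ u.val + l ∧ u.val + l ≤ 2 * l - 1 := by omega
  set vul : {v : ℕ // 1 ≤ v ∧ v ≤ 2 * l - 1} := ⟨u.val + l, vul_prop⟩ with hvul
  have hvul_ne_u : vul ≠ u := by
    intro h; have := congrArg Subtype.val h; simp only [hvul] at this; omega
  have hvul_ne_u' : vul ≠ u' := by
    intro h; have := congrArg Subtype.val h
    simp only [hvul] at this; omega
  have hτvul : τ vul = vul := Equiv.swap_apply_of_ne_of_ne hvul_ne_u hvul_ne_u'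
  -- the swap preserves adjacency for subgraphs avoiding u'
  have hadjswap : ∀ (H : G.Subgraph), u' ∉ H.verts →
      ∀ x y, H.Adj x y → G.Adj (τ x) (τ y) := by
    intro H hu' x y hxy
    have hx : x ∈ H.verts := H.edge_vert hxy
    have hy : y ∈ H.verts := H.edge_vert (H.adj_symm hxy)
    have hxne : x ≠ u' := fun h => hu' (h ▸ hx)
    have hyne : y ≠ u' := fun h => hu' (h ▸ hy)
    have hGadj := H.adj_sub hxy
    rw [hG, graphA_adj] at hGadj
    obtain ⟨hne12, habs⟩ := hGadj
    rw [abs_le] at habs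
    have hxb := x.2
    have hyb := y.2
    have hub := u.2
    rw [hG, graphA_adj]
    by_cases hxu : x = u
    · by_cases hyu : y = u
      · exact absurd (hxu.trans hyu.symm) hne12
      · rw [hxu, hτu, Equiv.swap_apply_of_ne_of_ne hyu hyne]
        have hyvne : y.val ≠ u.val + 1 := by
          intro h; exact hyne (Subtype.ext (h.trans h3.symm))
        have hxuv : x.val = u.val := congrArg Subtype.val hxu
        refine ⟨fun h => hyne (Subtype.ext ?_), ?_⟩
        · have := congrArg Subtype.val h; omega
        · rw [abs_le, h3]; push_cast; push_cast at habs; omega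
    · by_cases hyu : y = u
      · rw [hyu, hτu, Equiv.swap_apply_of_ne_of_ne hxu hxne]
        have hxvne : x.val ≠ u.val + 1 := by
          intro h; exact hxne (Subtype.ext (h.trans h3.symm))
        have hyuv : y.val = u.val := congrArg Subtype.val hyu
        refine ⟨fun h => hxne (Subtype.ext ?_), ?_⟩
        · have := congrArg Subtype.val h; omega
        · rw [abs_le, h3]; push_cast; push_cast at habs; omega
      · rw [Equiv.swap_apply_of_ne_of_ne hxu hxne, Equiv.swap_apply_of_ne_of_ne hyu hyne]
        exact ⟨hne12, by rw [abs_le]; exact habs⟩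
  set Ψ : G.Subgraph → G.Subgraph :=
    fun H => if h : u' ∈ H.verts then H else swapSub G τ H (hadjswap H h) with hΨ
  -- (F1) Ψ maps Su into Su'
  have hmaps : ∀ H ∈ Su, Ψ H ∈ Su' := by
    rintro H ⟨⟨iso⟩, hu⟩
    by_cases h : u' ∈ H.verts
    · rw [hΨ]; simp only [dif_pos h]
      exact ⟨⟨iso⟩, h⟩
    · rw [hΨ]; simp only [dif_neg h]
      obtain ⟨e'⟩ := swapSub_coe_iso τ H (hadjswap H h)
      refine ⟨⟨e'.trans iso⟩, ?_⟩
      show u' ∈ τ '' H.verts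
      exact ⟨u, hu, hτu⟩
  -- (F2) Ψ is injective on Su
  have hinjOn : Set.InjOn Ψ Su := by
    rintro H hH H' hH' heq
    rw [hΨ] at heq
    by_cases c1 : u' ∈ H.verts <;> by_cases c2 : u' ∈ H'.verts
    · simpa only [dif_pos c1, dif_pos c2] using heq
    · exfalso
      simp only [dif_pos c1, dif_neg c2] at heq
      have hu : u ∈ H.verts := hH.2
      rw [heq] at hu
      have : τ.symm u ∈ H'.verts := (Set.mem_image_equiv).mp hu
      rw [hτsymm, hτu] at this
      exact c2 this
    · exfalso
      simp only [dif_neg c1, dif_pos c2] at heq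
      have hu : u ∈ H'.verts := hH'.2
      rw [← heq] at hu
      have : τ.symm u ∈ H.verts := (Set.mem_image_equiv).mp hu
      rw [hτsymm, hτu] at this
      exact c1 this
    · simp only [dif_neg c1, dif_neg c2] at heq
      apply SimpleGraph.Subgraph.ext
      · have hv := congrArg SimpleGraph.Subgraph.verts heq
        simp only [swapSub_verts] at hv
        exact Set.image_injective.mpr τ.injective hv
      · funext x y
        have h2 := congrFun (congrFun (congrArg SimpleGraph.Subgraph.Adj heq) (τ x)) (τ y)
        simpa only [swapSub_adj, eq_iff_iff, Equiv.symm_apply_apply] using h2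
  -- (F3) images under Ψ either contain u or lack the edge (u', u+l)
  have hQ : ∀ H ∈ Su, u ∈ (Ψ H).verts ∨ ¬ (Ψ H).Adj u' vul := by
    intro H hH
    rw [hΨ]
    by_cases h : u' ∈ H.verts
    · left; simp only [dif_pos h]; exact hH.2
    · right; simp only [dif_neg h]
      intro hadj
      rw [swapSub_adj, hτsymm, hτu', hτvul] at hadj
      have hGadj := H.adj_sub hadj
      rw [hG, graphA_adj] at hGadj
      obtain ⟨_, habs⟩ := hGadj
      rw [abs_le] at habs
      simp only [hvul] at habs
      push_cast at habs
      omega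
  -- the extra family of subgraphs
  obtain ⟨a₀, b₀, hab₀⟩ := exists_adj_of_diam_two F (by omega) hdiam
  have hane : a₀ ≠ b₀ := hab₀.ne
  have hDc : Fintype.card {a : W // a ≠ a₀ ∧ a ≠ b₀} = n - 2 := by
    have e0 : {a : W // a ≠ a₀ ∧ a ≠ b₀} ≃ ↥((Finset.univ.erase a₀).erase b₀) :=
      Equiv.subtypeEquivRight (fun a => by simp [Finset.mem_erase]; tauto)
    rw [Fintype.card_congr e0, Fintype.card_coe,
      Finset.card_erase_of_mem (Finset.mem_erase.mpr ⟨hab₀.ne', Finset.mem_univ _⟩),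
      Finset.card_erase_of_mem (Finset.mem_univ _), Finset.card_univ, hcard]
    omega
  set P := Finset.powersetCard (n - 2) (Finset.Icc (u.val + 2) (u.val + l - 1)) with hP
  have hPs : ∀ s : ↥P, (∀ x ∈ s.1, u.val + 2 ≤ x ∧ x ≤ u.val + l - 1) ∧ s.1.card = n - 2 := by
    intro s
    have := Finset.mem_powersetCard.mp s.2
    exact ⟨fun x hx => Finset.mem_Icc.mp (this.1 hx), this.2⟩
  have eqP : ∀ s : ↥P, Fintype.card {a : W // a ≠ a₀ ∧ a ≠ b₀} =
      Fintype.card {x : ℕ // x ∈ s.1} := fun s => by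
    rw [hDc, Fintype.card_coe, (hPs s).2]
  set eS : (s : ↥P) → ({a : W // a ≠ a₀ ∧ a ≠ b₀} ≃ {x : ℕ // x ∈ s.1}) :=
    fun s => Fintype.equivOfCardEq (eqP s) with heS
  set g : ↥P → G.Subgraph := fun s =>
    embSub G F (famPhi l u.val ⟨h1, hu2⟩ a₀ b₀ s.1 (hPs s).1 (eS s))
      (fun a b hab => famPhi_adj l u.val ⟨h1, hu2⟩ a₀ b₀ s.1 (hPs s).1 (eS s) hane a b hab.ne)
    with hg
  -- (G1) range g ⊆ Su'
  have hg_mem : ∀ s : ↥P, g s ∈ Su' := by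
    intro s
    refine ⟨embSub_coe_iso _ _ (famPhi_injective l u.val ⟨h1, hu2⟩ a₀ b₀ s.1 (hPs s).1 (eS s) hane), ?_⟩
    show u' ∈ Set.range _
    exact ⟨a₀, Subtype.ext ((famPhi_a₀ l u.val ⟨h1, hu2⟩ a₀ b₀ s.1 (hPs s).1 (eS s)).trans h3.symm)⟩
  -- (G2) members of the family contain the edge (u', u+l) and avoid u
  have hg_edge : ∀ s : ↥P, (g s).Adj u' vul ∧ u ∉ (g s).verts := by
    intro s
    constructor
    · exact ⟨a₀, b₀, hab₀,
        Subtype.ext ((famPhi_a₀ l u.val ⟨h1, hu2⟩ a₀ b₀ s.1 (hPs s).1 (eS s)).trans h3.symm),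
        Subtype.ext (famPhi_b₀ l u.val ⟨h1, hu2⟩ a₀ b₀ s.1 (hPs s).1 (eS s) hane.symm)⟩
    · rintro ⟨a, ha⟩
      have := (famPhi_bounds l u.val ⟨h1, hu2⟩ a₀ b₀ s.1 (hPs s).1 (eS s) a).1
      rw [ha] at this
      omega
  -- (G3) g is injective
  have hmem_iff : ∀ (s : ↥P) (x : ℕ), x ∈ s.1 ↔
      ∃ (hx : 1 ≤ x ∧ x ≤ 2 * l - 1), (⟨x, hx⟩ : {v : ℕ // 1 ≤ v ∧ v ≤ 2 * l - 1}) ∈ (g s).verts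
        ∧ x ≠ u.val + 1 ∧ x ≠ u.val + l := by
    intro s x
    constructor
    · intro hx
      have hbx := (hPs s).1 x hx
      obtain ⟨a, ha⟩ := famPhi_mem_range l u.val ⟨h1, hu2⟩ a₀ b₀ s.1 (hPs s).1
        (eS s) x hx
      exact ⟨⟨by omega, by omega⟩, ⟨a, Subtype.ext ha⟩, by omega, by omega⟩
    · rintro ⟨hx, ⟨a, ha⟩, hx1, hx2⟩
      have hval := congrArg Subtype.val ha
      by_cases ha1 : a = a₀
      · exfalso; apply hx1
        have hv0 := famPhi_a₀ l u.val ⟨h1, hu2⟩ a₀ b₀ s.1 (hPs s).1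
          (eS s)
        rw [ha1] at hval
        exact hval.symm.trans hv0
      by_cases ha2 : a = b₀
      · exfalso; apply hx2
        have hv0 := famPhi_b₀ l u.val ⟨h1, hu2⟩ a₀ b₀ s.1 (hPs s).1
          (eS s) hane.symm
        rw [ha2] at hval
        exact hval.symm.trans hv0
      · have := famPhi_other l u.val ⟨h1, hu2⟩ a₀ b₀ s.1 (hPs s).1
          (eS s) ha1 ha2
        rw [ha] at this
        exact this
  have hg_inj : Function.Injective g := by
    intro s t hst
    apply Subtype.ext
    apply Finset.ext
    intro x
    rw [hmem_iff s x, hmem_iff t x, hst]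
  -- counting
  have hunion_sub : Ψ '' Su ∪ Set.range g ⊆ Su' := by
    rintro t (⟨H, hH, rfl⟩ | ⟨s, rfl⟩)
    · exact hmaps H hH
    · exact hg_mem s
  have hdisj : Disjoint (Ψ '' Su) (Set.range g) := by
    rw [Set.disjoint_left]
    rintro t ⟨H, hH, rfl⟩ ⟨s, hs⟩
    obtain ⟨hadj, hnu⟩ := hg_edge s
    rcases hQ H hH with h | h
    · rw [← hs] at h
      exact hnu h
    · rw [← hs] at h
      exact h hadj
  have hrange_card : (Set.range g).ncard = Nat.choose (l - 2) (n - 2) := by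
    rw [← Set.image_univ, Set.ncard_image_of_injective _ hg_inj, Set.ncard_univ,
      Nat.card_eq_fintype_card, Fintype.card_coe, hP, Finset.card_powersetCard, Nat.card_Icc]
    congr 1
    omega
  have hcount := Set.ncard_le_ncard hunion_sub (Set.toFinite _)
  rw [Set.ncard_union_eq hdisj (Set.toFinite _) (Set.toFinite _),
    Set.ncard_image_of_injOn hinjOn, hrange_card] at hcount
  rw [hFdeg_u, hFdeg_u']
  exact hcount

end Main
theorem Fdeg_strictly_increasing {W : Type*} [Fintype W] (F : SimpleGraph W)
    (n l : ℕ) (hn : 3 ≤ n) (hl : n < l) (hcard : Fintype.card W = n) (hdiam : F.diam = 2) :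
    (∀ u u' : {v : ℕ // 1 ≤ v ∧ v ≤ 2 * l - 1}, 1 ≤ u.val → u.val ≤ l - 1 →
        u'.val = u.val + 1 →
        Fdeg (graphA l) F u + Nat.choose (l - 2) (n - 2) ≤ Fdeg (graphA l) F u') ∧
      (∀ u u' : {v : ℕ // 1 ≤ v ∧ v ≤ 2 * l - 1}, u.val < u'.val → u'.val ≤ l →
        Fdeg (graphA l) F u < Fdeg (graphA l) F u') := by
  have hchoose : 0 < Nat.choose (l - 2) (n - 2) := Nat.choose_pos (by omega)
  refine ⟨fun u u' h1 h2 h3 => key_step F n l hn hl hcard hdiam u u' h1 h2 h3, ?_⟩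
  have main : ∀ d : ℕ, ∀ u u' : {v : ℕ // 1 ≤ v ∧ v ≤ 2 * l - 1}, u.val < u'.val →
      u'.val ≤ l → u'.val = u.val + d + 1 → Fdeg (graphA l) F u < Fdeg (graphA l) F u' := by
    intro d
    induction d with
    | zero =>
      intro u u' hlt hle heq
      have := key_step F n l hn hl hcard hdiam u u' u.2.1 (by omega) (by omega)
      omega
    | succ d ih =>
      intro u u' hlt hle heq
      have hl4 : 4 ≤ l := by omega
      have hwp : 1 ≤ u.val + d + 1 ∧ u.val + d + 1 ≤ 2 * l - 1 := by omega
      set w : {v : ℕ // 1 ≤ v ∧ v ≤ 2 * l - 1} := ⟨u.val + d + 1, hwp⟩ with hw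
      have step1 : Fdeg (graphA l) F u < Fdeg (graphA l) F w :=
        ih u w (by simp [hw]) (by simp [hw]; omega) (by simp [hw])
      have step2 := key_step F n l hn hl hcard hdiam w u' w.2.1 (by simp [hw]; omega)
        (by simp [hw]; omega)
      omega
  intro u u' hlt hle
  exact main (u'.val - u.val - 1) u u' hlt hle (by omega)
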